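/- Let A : X → Y and B, C : Y → X satisfy A(BA)² = ABACA = ACABA = (AC)²A. Then for all n ∈ ℕ, dim N((AC−I)^{n+1})/N((AC−I)^n) = dim N((BA−I)^{n+1})/N((BA−I)^n) (i.e. c'_n(AC−I) = c'_n(BA−I)). -/

import Mathlib

open Polynomial ContinuousLinearMap

universe u

section AuxJacobson

variable {M N : Type u} [NormedAddCommGroup M] [NormedSpace ℂ M]
  [NormedAddCommGroup N] [NormedSpace ℂ N]

private lemma aux_intertwine (U : M →L[ℂ] M) (V : N →L[ℂ] N) (φ : M →L[ℂ] N)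
    (hφ : V ∘L φ = φ ∘L U) (j : ℕ) :
    ((V - 1) ^ j) ∘L φ = φ ∘L ((U - 1) ^ j) := by
  induction j with
  | zero => simp [ContinuousLinearMap.one_def]
  | succ j ih =>
    have h1 : (V - 1) ∘L φ = φ ∘L (U - 1) := by
      rw [ContinuousLinearMap.sub_comp, ContinuousLinearMap.comp_sub, hφ]; simp [ContinuousLinearMap.one_def]
    rw [pow_succ, pow_succ, mul_def, mul_def, ContinuousLinearMap.comp_assoc, h1, ← ContinuousLinearMap.comp_assoc, ih, ContinuousLinearMap.comp_assoc]

private lemma aux_rank_le (U : M →L[ℂ] M) (V : N →L[ℂ] N) (φ : M →L[ℂ] N) (ψ : N →L[ℂ] M)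
    (hφ : V ∘L φ = φ ∘L U) (hψ : U ∘L ψ = ψ ∘L V) (k : ℕ) (hk : ψ ∘L φ = U ^ k) (n : ℕ) :
    Module.rank ℂ (LinearMap.ker (((U - 1) ^ (n + 1) : M →L[ℂ] M) : M →ₗ[ℂ] M) ⧸
        (LinearMap.ker (((U - 1) ^ n : M →L[ℂ] M) : M →ₗ[ℂ] M)).comap
          (LinearMap.ker (((U - 1) ^ (n + 1) : M →L[ℂ] M) : M →ₗ[ℂ] M)).subtype) ≤
    Module.rank ℂ (LinearMap.ker (((V - 1) ^ (n + 1) : N →L[ℂ] N) : N →ₗ[ℂ] N) ⧸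
        (LinearMap.ker (((V - 1) ^ n : N →L[ℂ] N) : N →ₗ[ℂ] N)).comap
          (LinearMap.ker (((V - 1) ^ (n + 1) : N →L[ℂ] N) : N →ₗ[ℂ] N)).subtype) := by
  have hcomm : ((U - 1) ^ n) * (U ^ k) =
      (U - 1) ^ n + (∑ i ∈ Finset.range k, U ^ i) * (U - 1) ^ (n + 1) := by
    have hgs : (∑ i ∈ Finset.range k, U ^ i) * (U - 1) = U ^ k - 1 := geom_sum_mul U k
    have hc : Commute ((U - 1) ^ n) (∑ i ∈ Finset.range k, U ^ i) := by
      apply Commute.pow_left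
      apply Commute.sum_right
      intro i _
      exact ((Commute.refl U).pow_right i).sub_left (Commute.one_left (U ^ i))
    have h0 : U ^ k = 1 + (∑ i ∈ Finset.range k, U ^ i) * (U - 1) := by rw [hgs]; abel
    rw [h0, mul_add, mul_one, ← mul_assoc, hc.eq, mul_assoc, ← pow_succ]
  have hmem : ∀ x ∈ LinearMap.ker (((U - 1) ^ (n + 1) : M →L[ℂ] M) : M →ₗ[ℂ] M),
      φ x ∈ LinearMap.ker (((V - 1) ^ (n + 1) : N →L[ℂ] N) : N →ₗ[ℂ] N) := by
    intro x hx
    have h := DFunLike.congr_fun (aux_intertwine U V φ hφ (n + 1)) x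
    simp only [ContinuousLinearMap.comp_apply] at h
    simp only [LinearMap.mem_ker, ContinuousLinearMap.coe_coe] at hx ⊢
    rw [h, hx, map_zero]
  let f : (LinearMap.ker (((U - 1) ^ (n + 1) : M →L[ℂ] M) : M →ₗ[ℂ] M)) →ₗ[ℂ]
      (LinearMap.ker (((V - 1) ^ (n + 1) : N →L[ℂ] N) : N →ₗ[ℂ] N)) :=
    (φ : M →ₗ[ℂ] N).restrict hmem
  let NV := (LinearMap.ker (((V - 1) ^ n : N →L[ℂ] N) : N →ₗ[ℂ] N)).comap
    (LinearMap.ker (((V - 1) ^ (n + 1) : N →L[ℂ] N) : N →ₗ[ℂ] N)).subtype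
  let NU := (LinearMap.ker (((U - 1) ^ n : M →L[ℂ] M) : M →ₗ[ℂ] M)).comap
    (LinearMap.ker (((U - 1) ^ (n + 1) : M →L[ℂ] M) : M →ₗ[ℂ] M)).subtype
  let g := NV.mkQ ∘ₗ f
  have hle : NU ≤ LinearMap.ker g := by
    rintro ⟨x, hx⟩ hxn
    simp only [NU, Submodule.mem_comap, Submodule.subtype_apply, LinearMap.mem_ker,
      ContinuousLinearMap.coe_coe] at hxn
    simp only [g, LinearMap.mem_ker, LinearMap.comp_apply, Submodule.mkQ_apply,
      Submodule.Quotient.mk_eq_zero, NV, Submodule.mem_comap, Submodule.subtype_apply,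
      f, LinearMap.restrict_apply]
    show ((V - 1) ^ n) (φ x) = 0
    have h := DFunLike.congr_fun (aux_intertwine U V φ hφ n) x
    simp only [ContinuousLinearMap.comp_apply] at h
    rw [h, hxn, map_zero]
  have hinj : Function.Injective (NU.liftQ g hle) := by
    rw [← LinearMap.ker_eq_bot]
    apply Submodule.ker_liftQ_eq_bot
    rintro ⟨x, hx⟩ hgx
    simp only [g, LinearMap.mem_ker, LinearMap.comp_apply, Submodule.mkQ_apply,
      Submodule.Quotient.mk_eq_zero, NV, Submodule.mem_comap, Submodule.subtype_apply,
      f, LinearMap.restrict_apply] at hgx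
    have h2 : ((V - 1) ^ n) (φ x) = 0 := hgx
    simp only [LinearMap.mem_ker, ContinuousLinearMap.coe_coe] at hx
    simp only [NU, Submodule.mem_comap, Submodule.subtype_apply, LinearMap.mem_ker,
      ContinuousLinearMap.coe_coe]
    have hA : ((U - 1) ^ n) (ψ (φ x)) = 0 := by
      have h := DFunLike.congr_fun (aux_intertwine V U ψ hψ n) (φ x)
      simp only [ContinuousLinearMap.comp_apply] at h
      rw [h, h2, map_zero]
    have hUk : (U ^ k) x = ψ (φ x) := by
      rw [← hk]; simp [ContinuousLinearMap.comp_apply]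
    have h := DFunLike.congr_fun hcomm x
    simp only [ContinuousLinearMap.mul_apply, ContinuousLinearMap.add_apply] at h
    rw [hUk, hA, hx, map_zero, add_zero] at h
    exact h.symm
  exact LinearMap.rank_le_of_injective (NU.liftQ g hle) hinj

end AuxJacobson

variable {X Y : Type u} [NormedAddCommGroup X] [NormedSpace ℂ X] [CompleteSpace X]
  [NormedAddCommGroup Y] [NormedSpace ℂ Y] [CompleteSpace Y]
theorem stmt7 (A : X →L[ℂ] Y) (B C : Y →L[ℂ] X)
    (h1 : A ∘L B ∘L A ∘L B ∘L A = A ∘L B ∘L A ∘L C ∘L A)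
    (h2 : A ∘L B ∘L A ∘L C ∘L A = A ∘L C ∘L A ∘L B ∘L A)
    (h3 : A ∘L C ∘L A ∘L B ∘L A = A ∘L C ∘L A ∘L C ∘L A) (n : ℕ) :
    Module.rank ℂ (LinearMap.ker (((A ∘L C - 1) ^ (n + 1) : Y →L[ℂ] Y) : Y →ₗ[ℂ] Y) ⧸
        (LinearMap.ker (((A ∘L C - 1) ^ n : Y →L[ℂ] Y) : Y →ₗ[ℂ] Y)).comap
          (LinearMap.ker (((A ∘L C - 1) ^ (n + 1) : Y →L[ℂ] Y) : Y →ₗ[ℂ] Y)).subtype) =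
      Module.rank ℂ (LinearMap.ker (((B ∘L A - 1) ^ (n + 1) : X →L[ℂ] X) : X →ₗ[ℂ] X) ⧸
        (LinearMap.ker (((B ∘L A - 1) ^ n : X →L[ℂ] X) : X →ₗ[ℂ] X)).comap
          (LinearMap.ker (((B ∘L A - 1) ^ (n + 1) : X →L[ℂ] X) : X →ₗ[ℂ] X)).subtype) := by
  have e1 : ∀ z : X, A (B (A (B (A z)))) = A (B (A (C (A z)))) := fun z => by
    have := DFunLike.congr_fun h1 z; simpa using this
  have e2 : ∀ z : X, A (B (A (C (A z)))) = A (C (A (B (A z)))) := fun z => by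
    have := DFunLike.congr_fun h2 z; simpa using this
  have e3 : ∀ z : X, A (C (A (B (A z)))) = A (C (A (C (A z)))) := fun z => by
    have := DFunLike.congr_fun h3 z; simpa using this
  -- intertwinings between C∘LA and B∘LA
  have hφ2 : (B ∘L A) ∘L (B ∘L A ∘L C ∘L A) = (B ∘L A ∘L C ∘L A) ∘L (C ∘L A) := by
    ext x; simp only [ContinuousLinearMap.comp_apply]
    rw [e2 x, e3 x]
  have hψ2 : (C ∘L A) ∘L (C ∘L A ∘L B ∘L A) = (C ∘L A ∘L B ∘L A) ∘L (B ∘L A) := by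
    ext x; simp only [ContinuousLinearMap.comp_apply]
    rw [← e2 x, ← e1 x]
  have hk2 : (C ∘L A ∘L B ∘L A) ∘L (B ∘L A ∘L C ∘L A) = (C ∘L A) ^ 4 := by
    ext x; simp only [ContinuousLinearMap.comp_apply, pow_succ, pow_zero,
      ContinuousLinearMap.mul_apply, ContinuousLinearMap.one_apply]
    rw [e1 (C (A x)), e2 (C (A x)), e3 (C (A x))]
  have hk2' : (B ∘L A ∘L C ∘L A) ∘L (C ∘L A ∘L B ∘L A) = (B ∘L A) ^ 4 := by
    ext x; simp only [ContinuousLinearMap.comp_apply, pow_succ, pow_zero,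
      ContinuousLinearMap.mul_apply, ContinuousLinearMap.one_apply]
    rw [← e3 (B (A x)), ← e2 (B (A x)), ← e2 x, ← e1 x]
  -- intertwinings between A∘LC and C∘LA (Jacobson)
  have hφ1 : (C ∘L A) ∘L C = C ∘L (A ∘L C) := by ext x; rfl
  have hψ1 : (A ∘L C) ∘L A = A ∘L (C ∘L A) := by ext x; rfl
  have hk1 : A ∘L C = (A ∘L C) ^ 1 := (pow_one _).symm
  have hk1' : C ∘L A = (C ∘L A) ^ 1 := (pow_one _).symm
  apply le_antisymm
  · exact le_trans
      (aux_rank_le (A ∘L C) (C ∘L A) C A hφ1 hψ1 1 hk1 n)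
      (aux_rank_le (C ∘L A) (B ∘L A) (B ∘L A ∘L C ∘L A) (C ∘L A ∘L B ∘L A) hφ2 hψ2 4 hk2 n)
  · exact le_trans
      (aux_rank_le (B ∘L A) (C ∘L A) (C ∘L A ∘L B ∘L A) (B ∘L A ∘L C ∘L A) hψ2 hφ2 4 hk2' n)
      (aux_rank_le (C ∘L A) (A ∘L C) A C hψ1 hφ1 1 hk1' n)
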